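/- For every n-GNN all of whose activation functions are eventually constant (with rational coefficient matrices and bias vectors), and for every layer index ℓ with 0 ≤ ℓ ≤ L, the ℓ-spectrum of the GNN is a finite set. -/
import Mathlib


set_option maxHeartbeats 1000000

/-- An `n`-graph: a nonempty finite vertex set, a set of directed edges,
and `n` vertex colors. -/
structure NGraph (n : ℕ) where
  V : Type
  [fintypeV : Fintype V]
  [decEqV : DecidableEq V]
  nonemptyV : Nonempty V
  E : V → V → Bool
  U : Fin n → V → Bool

attribute [instance] NGraph.fintypeV NGraph.decEqV

/-- An `n`-GNN.  Layer `ℓ+1` (for `0 ≤ ℓ < L`) has activation function `act ℓ`,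
coefficient matrices `C ℓ`, `Aout ℓ`, `Ain ℓ`, `R ℓ` and bias vector `b ℓ`. -/
structure GNN (n : ℕ) where
  L : ℕ
  Lpos : 0 < L
  d : ℕ → ℕ
  d0 : d 0 = n
  dpos : ∀ ℓ, 0 < d ℓ
  act : ℕ → ℚ → ℚ
  C : (ℓ : ℕ) → Matrix (Fin (d (ℓ+1))) (Fin (d ℓ)) ℚ
  Aout : (ℓ : ℕ) → Matrix (Fin (d (ℓ+1))) (Fin (d ℓ)) ℚ
  Ain : (ℓ : ℕ) → Matrix (Fin (d (ℓ+1))) (Fin (d ℓ)) ℚ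
  R : (ℓ : ℕ) → Matrix (Fin (d (ℓ+1))) (Fin (d ℓ)) ℚ
  b : (ℓ : ℕ) → Fin (d (ℓ+1)) → ℚ

/-- The feature maps `ξ⁽ℓ⁾` computed by a GNN on an `n`-graph. -/
def GNN.feat {n : ℕ} (A : GNN n) (G : NGraph n) : (ℓ : ℕ) → G.V → (Fin (A.d ℓ) → ℚ)
  | 0 => fun v i => if G.U (Fin.cast A.d0 i) v then 1 else 0
  | ℓ+1 => fun v i =>
      A.act ℓ
        ((A.C ℓ).mulVec (A.feat G ℓ v) i
          + (A.Aout ℓ).mulVec (∑ u ∈ Finset.univ.filter (fun u => G.E v u), A.feat G ℓ u) i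
          + (A.Ain ℓ).mulVec (∑ u ∈ Finset.univ.filter (fun u => G.E u v), A.feat G ℓ u) i
          + (A.R ℓ).mulVec (∑ u, A.feat G ℓ u) i
          + A.b ℓ i)

/-- A GNN accepts `(G, v)` if the first entry of the final feature vector is `≥ 1/2`. -/
def GNN.accepts {n : ℕ} (A : GNN n) (G : NGraph n) (v : G.V) : Prop :=
  1/2 ≤ A.feat G A.L v ⟨0, A.dpos A.L⟩

/-- A GNN is satisfiable if it accepts some node of some graph. -/
def GNN.Satisfiable {n : ℕ} (A : GNN n) : Prop :=
  ∃ (G : NGraph n) (v : G.V), A.accepts G v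

/-- A GNN is universally satisfiable if it accepts every node of some graph. -/
def GNN.UnivSatisfiable {n : ℕ} (A : GNN n) : Prop :=
  ∃ G : NGraph n, ∀ v : G.V, A.accepts G v

/-- A GNN is local if all its global-readout matrices are zero. -/
def GNN.IsLocal {n : ℕ} (A : GNN n) : Prop := ∀ ℓ < A.L, A.R ℓ = 0

/-- A GNN is outgoing-only if all its incoming-aggregation matrices are zero. -/
def GNN.IsOutgoingOnly {n : ℕ} (A : GNN n) : Prop := ∀ ℓ < A.L, A.Ain ℓ = 0

/-- A function is eventually constant if it is constant below some left threshold
and constant above some right threshold. -/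
def EventuallyConstant (f : ℚ → ℚ) : Prop :=
  ∃ tl tr : ℚ, tl < tr ∧ (∀ x ≤ tl, f x = f tl) ∧ (∀ x ≥ tr, f x = f tr)

/-- The truncated ReLU. -/
def trReLU (x : ℚ) : ℚ := min (max x 0) 1

/-- The standard ReLU. -/
def ReLU (x : ℚ) : ℚ := max x 0

/-- The `ℓ`-spectrum of a GNN: all values of the `ℓ`-th feature map over all
`n`-graphs and vertices. -/
def GNN.spectrum {n : ℕ} (A : GNN n) (ℓ : ℕ) : Set (Fin (A.d ℓ) → ℚ) :=
  { s | ∃ (G : NGraph n) (v : G.V), A.feat G ℓ v = s }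


/-- `q` can be written with denominator `D`. -/
def HasDen (D : ℕ) (q : ℚ) : Prop := ∃ k : ℤ, (D : ℚ) * q = (k : ℚ)

lemma hasDen_self (q : ℚ) : HasDen q.den q :=
  ⟨q.num, by rw [mul_comm, Rat.mul_den_eq_num]⟩

lemma hasDen_mono {D D' : ℕ} {q : ℚ} (h : HasDen D q) (hd : D ∣ D') : HasDen D' q := by
  obtain ⟨m, rfl⟩ := hd
  obtain ⟨k, hk⟩ := h
  exact ⟨m * k, by push_cast; rw [mul_comm (D:ℚ) (m:ℚ), mul_assoc, hk]⟩

lemma hasDen_add {D : ℕ} {a b : ℚ} (ha : HasDen D a) (hb : HasDen D b) :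
    HasDen D (a + b) := by
  obtain ⟨k, hk⟩ := ha
  obtain ⟨l, hl⟩ := hb
  exact ⟨k + l, by push_cast; rw [mul_add, hk, hl]⟩

lemma hasDen_mul {D1 D2 : ℕ} {a b : ℚ} (ha : HasDen D1 a) (hb : HasDen D2 b) :
    HasDen (D1 * D2) (a * b) := by
  obtain ⟨k, hk⟩ := ha
  obtain ⟨l, hl⟩ := hb
  refine ⟨k * l, ?_⟩
  push_cast
  rw [← hk, ← hl]; ring

lemma hasDen_sum {D : ℕ} {ι : Type*} (T : Finset ι) (g : ι → ℚ)
    (h : ∀ i ∈ T, HasDen D (g i)) : HasDen D (∑ i ∈ T, g i) := by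
  classical
  induction T using Finset.induction_on with
  | empty => exact ⟨0, by simp⟩
  | @insert a s ha ih =>
    rw [Finset.sum_insert ha]
    exact hasDen_add (h a (Finset.mem_insert_self a s))
      (ih fun i hi => h i (Finset.mem_insert_of_mem hi))

lemma ec_image_finite {f : ℚ → ℚ} (hf : EventuallyConstant f) {D : ℕ} (hD : 0 < D) :
    (f '' {q | HasDen D q}).Finite := by
  obtain ⟨tl, tr, hlt, hl, hr⟩ := hf
  have hDQ : (0:ℚ) < D := by exact_mod_cast hD
  apply Set.Finite.subset (Set.Finite.union ((Set.finite_singleton (f tr)).insert (f tl))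
    ((Set.finite_Icc ⌈(D:ℚ)*tl⌉ ⌊(D:ℚ)*tr⌋).image (fun k : ℤ => f ((k:ℚ)/D))))
  rintro y ⟨q, ⟨k, hk⟩, rfl⟩
  rcases le_or_gt q tl with h | h
  · exact Set.mem_union_left _ (by simp [hl q h])
  rcases le_or_gt tr q with h' | h'
  · exact Set.mem_union_left _ (by simp [hr q h'])
  · refine Set.mem_union_right _ ⟨k, Set.mem_Icc.mpr ⟨?_, ?_⟩, ?_⟩
    · refine Int.ceil_le.mpr ?_
      rw [← hk]
      exact mul_le_mul_of_nonneg_left h.le hDQ.le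
    · refine Int.le_floor.mpr ?_
      rw [← hk]
      exact mul_le_mul_of_nonneg_left h'.le hDQ.le
    · have hq : (k:ℚ)/D = q := by
        rw [← hk, mul_comm]
        exact mul_div_cancel_right₀ q hDQ.ne'
      exact congrArg f hq

/-- For every `n`-GNN all of whose activation functions are
eventually constant, and every layer `ℓ ≤ L`, the `ℓ`-spectrum is finite. -/
theorem spectrum_finite_of_eventuallyConstant {n : ℕ} (A : GNN n)
    (hec : ∀ ℓ < A.L, EventuallyConstant (A.act ℓ)) :
    ∀ ℓ ≤ A.L, (A.spectrum ℓ).Finite := by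
  intro ℓ
  induction ℓ with
  | zero =>
    intro _
    have hsub : A.spectrum 0 ⊆ Set.pi Set.univ (fun _ : Fin (A.d 0) => ({0, 1} : Set ℚ)) := by
      rintro s ⟨G, v, rfl⟩ i _
      simp only [GNN.feat]
      split <;> simp
    exact Set.Finite.subset
      (Set.Finite.pi fun _ => (Set.finite_singleton (1:ℚ)).insert 0) hsub
  | succ ℓ ih =>
    intro hℓ
    have hℓL : ℓ < A.L := hℓ
    have hS : (A.spectrum ℓ).Finite := ih (le_of_lt hℓL)
    classical
    set S := hS.toFinset with hSdef
    set D2 : ℕ := ∏ s ∈ S, ∏ i, (s i).den with hD2def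
    set D1 : ℕ := (∏ i, ∏ j, ((A.C ℓ i j).den * (A.Aout ℓ i j).den * (A.Ain ℓ i j).den
        * (A.R ℓ i j).den)) * ∏ i, (A.b ℓ i).den with hD1def
    have hD2pos : 0 < D2 :=
      Finset.prod_pos fun s _ => Finset.prod_pos fun i _ => (s i).pos
    have hD1pos : 0 < D1 := by
      refine Nat.mul_pos (Finset.prod_pos fun i _ => Finset.prod_pos fun j _ => ?_)
        (Finset.prod_pos fun i _ => (A.b ℓ i).pos)
      exact Nat.mul_pos (Nat.mul_pos (Nat.mul_pos (A.C ℓ i j).pos (A.Aout ℓ i j).pos)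
        (A.Ain ℓ i j).pos) (A.R ℓ i j).pos
    -- entries of spectrum elements have denominator D2
    have hx : ∀ (G : NGraph n) (u : G.V) (j : Fin (A.d ℓ)), HasDen D2 (A.feat G ℓ u j) := by
      intro G u j
      have hmem : A.feat G ℓ u ∈ S := hS.mem_toFinset.mpr ⟨G, u, rfl⟩
      exact hasDen_mono (hasDen_self _)
        ((Finset.dvd_prod_of_mem (fun i => (A.feat G ℓ u i).den) (Finset.mem_univ j)).trans
          (Finset.dvd_prod_of_mem (fun s => ∏ i, (s i).den) hmem))
    -- matrix entries and bias have denominator D1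
    have hC : ∀ i j, HasDen D1 (A.C ℓ i j) := by
      intro i j
      refine hasDen_mono (hasDen_self _) (dvd_trans ?_ (dvd_mul_right _ _))
      refine dvd_trans ?_ (Finset.dvd_prod_of_mem
        (fun i => ∏ j, (A.C ℓ i j).den * (A.Aout ℓ i j).den * (A.Ain ℓ i j).den * (A.R ℓ i j).den)
        (Finset.mem_univ i))
      refine dvd_trans ?_ (Finset.dvd_prod_of_mem
        (fun j => (A.C ℓ i j).den * (A.Aout ℓ i j).den * (A.Ain ℓ i j).den * (A.R ℓ i j).den)
        (Finset.mem_univ j))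
      exact dvd_mul_of_dvd_left (dvd_mul_of_dvd_left (dvd_mul_right _ _) _) _
    have hAout : ∀ i j, HasDen D1 (A.Aout ℓ i j) := by
      intro i j
      refine hasDen_mono (hasDen_self _) (dvd_trans ?_ (dvd_mul_right _ _))
      refine dvd_trans ?_ (Finset.dvd_prod_of_mem
        (fun i => ∏ j, (A.C ℓ i j).den * (A.Aout ℓ i j).den * (A.Ain ℓ i j).den * (A.R ℓ i j).den)
        (Finset.mem_univ i))
      refine dvd_trans ?_ (Finset.dvd_prod_of_mem
        (fun j => (A.C ℓ i j).den * (A.Aout ℓ i j).den * (A.Ain ℓ i j).den * (A.R ℓ i j).den)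
        (Finset.mem_univ j))
      exact dvd_mul_of_dvd_left (dvd_mul_of_dvd_left (dvd_mul_left _ _) _) _
    have hAin : ∀ i j, HasDen D1 (A.Ain ℓ i j) := by
      intro i j
      refine hasDen_mono (hasDen_self _) (dvd_trans ?_ (dvd_mul_right _ _))
      refine dvd_trans ?_ (Finset.dvd_prod_of_mem
        (fun i => ∏ j, (A.C ℓ i j).den * (A.Aout ℓ i j).den * (A.Ain ℓ i j).den * (A.R ℓ i j).den)
        (Finset.mem_univ i))
      refine dvd_trans ?_ (Finset.dvd_prod_of_mem
        (fun j => (A.C ℓ i j).den * (A.Aout ℓ i j).den * (A.Ain ℓ i j).den * (A.R ℓ i j).den)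
        (Finset.mem_univ j))
      exact dvd_mul_of_dvd_left (dvd_mul_left _ _) _
    have hR : ∀ i j, HasDen D1 (A.R ℓ i j) := by
      intro i j
      refine hasDen_mono (hasDen_self _) (dvd_trans ?_ (dvd_mul_right _ _))
      refine dvd_trans ?_ (Finset.dvd_prod_of_mem
        (fun i => ∏ j, (A.C ℓ i j).den * (A.Aout ℓ i j).den * (A.Ain ℓ i j).den * (A.R ℓ i j).den)
        (Finset.mem_univ i))
      refine dvd_trans ?_ (Finset.dvd_prod_of_mem
        (fun j => (A.C ℓ i j).den * (A.Aout ℓ i j).den * (A.Ain ℓ i j).den * (A.R ℓ i j).den)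
        (Finset.mem_univ j))
      exact dvd_mul_left _ _
    have hb : ∀ i, HasDen D1 (A.b ℓ i) := by
      intro i
      refine hasDen_mono (hasDen_self _) (dvd_trans ?_ (dvd_mul_left _ _))
      exact Finset.dvd_prod_of_mem (fun i => (A.b ℓ i).den) (Finset.mem_univ i)
    -- mulVec of a vector whose entries have denominator D2
    have hmv : ∀ (M : Matrix (Fin (A.d (ℓ+1))) (Fin (A.d ℓ)) ℚ)
        (hM : ∀ i j, HasDen D1 (M i j)) (x : Fin (A.d ℓ) → ℚ)
        (hxd : ∀ j, HasDen D2 (x j)) (i : Fin (A.d (ℓ+1))),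
        HasDen (D1 * D2) (M.mulVec x i) := by
      intro M hM x hxd i
      have : M.mulVec x i = ∑ j, M i j * x j := by
        simp [Matrix.mulVec, dotProduct]
      rw [this]
      exact hasDen_sum _ _ fun j _ => hasDen_mul (hM i j) (hxd j)
    -- the image set
    have hecl := hec ℓ hℓL
    have hF : ((A.act ℓ) '' {q | HasDen (D1 * D2) q}).Finite :=
      ec_image_finite hecl (Nat.mul_pos hD1pos hD2pos)
    have hsub : A.spectrum (ℓ+1) ⊆
        Set.pi Set.univ (fun _ : Fin (A.d (ℓ+1)) => (A.act ℓ) '' {q | HasDen (D1 * D2) q}) := by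
      rintro s ⟨G, v, rfl⟩ i _
      have hsum : ∀ (T : Finset G.V) (j : Fin (A.d ℓ)),
          HasDen D2 ((∑ u ∈ T, A.feat G ℓ u) j) := by
        intro T j
        rw [Finset.sum_apply]
        exact hasDen_sum _ _ fun u _ => hx G u j
      refine ⟨_, ?_, rfl⟩
      refine hasDen_add (hasDen_add (hasDen_add (hasDen_add ?_ ?_) ?_) ?_) ?_
      · exact hmv _ hC _ (fun j => hx G v j) i
      · exact hmv _ hAout _ (hsum _) i
      · exact hmv _ hAin _ (hsum _) i
      · exact hmv _ hR _ (hsum _) i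
      · exact hasDen_mono (hb i) (dvd_mul_right _ _)
    exact Set.Finite.subset (Set.Finite.pi fun _ => hF) hsub
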